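/- Let X be a Banach space, 1<p<∞, and A ⊆ K bounded containing at least two points. Then β_{p,X}^A is finite if and only if the UMD constant β_{p,X} is finite (i.e. if and only if X has the UMD property). -/

import Mathlib

open MeasureTheory Filter Set
open scoped ENNReal NNReal Topology

/-- The martingale difference sequence of `f`, with the convention `mdiff f 0 = f 0`. -/
noncomputable def mdiff {Ω X : Type} [AddGroup X] (f : ℕ → Ω → X) : ℕ → Ω → X :=
  fun n => if n = 0 then f 0 else f n - f (n - 1)

lemma mdiff_sum {Ω X : Type} [AddCommGroup X] (f : ℕ → Ω → X) (N : ℕ) (ω : Ω) :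
    ∑ k ∈ Finset.range (N + 1), mdiff f k ω = f N ω := by
  induction N with
  | zero => simp [mdiff]
  | succ n ih =>
    rw [Finset.sum_range_succ, ih]
    simp [mdiff]

lemma mdiff_sm {Ω X : Type} [NormedAddCommGroup X] {m : MeasurableSpace Ω}
    {f : ℕ → Ω → X} (hf : ∀ n, StronglyMeasurable (f n)) (k : ℕ) :
    StronglyMeasurable (mdiff f k) := by
  unfold mdiff
  split
  · exact hf 0
  · exact (hf k).sub (hf (k - 1))

/-- Key convexity lemma: an `L^p` bound for transforms with coefficients in `B` extends to
coefficients that are two-point convex combinations of elements of `B`. -/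
lemma key {𝕜 : Type} [RCLike 𝕜] {X : Type} [NormedAddCommGroup X] [NormedSpace 𝕜 X]
    {Ω : Type} {m : MeasurableSpace Ω} {μ : Measure Ω}
    {p' : ℝ≥0∞} (hp' : 1 ≤ p') {g : ℕ → Ω → X}
    (hg : ∀ k, AEStronglyMeasurable (g k) μ) {N : ℕ} {B A' : Set 𝕜} {C : ℝ≥0∞}
    (hdec : ∀ z ∈ A', ∃ x ∈ B, ∃ y ∈ B, ∃ t : ℝ, 0 ≤ t ∧ t ≤ 1 ∧
      ((t : 𝕜) * x + ((1 - t : ℝ) : 𝕜) * y = z))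
    (h : ∀ ε : ℕ → 𝕜, (∀ n, ε n ∈ B) →
      eLpNorm (fun ω => ∑ k ∈ Finset.range (N + 1), ε k • g k ω) p' μ ≤ C) :
    ∀ ε : ℕ → 𝕜, (∀ n, ε n ∈ A') →
      eLpNorm (fun ω => ∑ k ∈ Finset.range (N + 1), ε k • g k ω) p' μ ≤ C := by
  intro ε hε
  obtain ⟨b₀, hb₀, -⟩ := hdec (ε 0) (hε 0)
  have hsm : ∀ η : ℕ → 𝕜,
      AEStronglyMeasurable (fun ω => ∑ k ∈ Finset.range (N + 1), η k • g k ω) μ := by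
    intro η
    exact Finset.aestronglyMeasurable_fun_sum _ fun j _ => (hg j).const_smul (η j)
  have claim : ∀ k : ℕ, ∀ δ : ℕ → 𝕜, (∀ n, n < k → δ n ∈ A') → (∀ n, k ≤ n → δ n ∈ B) →
      eLpNorm (fun ω => ∑ j ∈ Finset.range (N + 1), δ j • g j ω) p' μ ≤ C := by
    intro k
    induction k with
    | zero => intro δ _ hB; exact h δ fun n => hB n (Nat.zero_le n)
    | succ k ih =>
      intro δ hA' hB
      obtain ⟨x, hx, y, hy, t, ht0, ht1, hxyt⟩ := hdec (δ k) (hA' k (Nat.lt_succ_self k))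
      set δ₁ := Function.update δ k x with hδ₁
      set δ₂ := Function.update δ k y with hδ₂
      have h₁ : eLpNorm (fun ω => ∑ j ∈ Finset.range (N + 1), δ₁ j • g j ω) p' μ ≤ C := by
        refine ih δ₁ (fun n hn => ?_) (fun n hn => ?_)
        · rw [hδ₁, Function.update_of_ne hn.ne]; exact hA' n (hn.trans (Nat.lt_succ_self k))
        · rcases eq_or_lt_of_le hn with hnk | hnk
          · rw [hδ₁, ← hnk, Function.update_self]; exact hx
          · rw [hδ₁, Function.update_of_ne (Nat.ne_of_gt hnk)]; exact hB n hnk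
      have h₂ : eLpNorm (fun ω => ∑ j ∈ Finset.range (N + 1), δ₂ j • g j ω) p' μ ≤ C := by
        refine ih δ₂ (fun n hn => ?_) (fun n hn => ?_)
        · rw [hδ₂, Function.update_of_ne hn.ne]; exact hA' n (hn.trans (Nat.lt_succ_self k))
        · rcases eq_or_lt_of_le hn with hnk | hnk
          · rw [hδ₂, ← hnk, Function.update_self]; exact hy
          · rw [hδ₂, Function.update_of_ne (Nat.ne_of_gt hnk)]; exact hB n hnk
      have hpt : (fun ω => ∑ j ∈ Finset.range (N + 1), δ j • g j ω)
          = ((t : 𝕜) • fun ω => ∑ j ∈ Finset.range (N + 1), δ₁ j • g j ω)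
            + (((1 - t : ℝ) : 𝕜) • fun ω => ∑ j ∈ Finset.range (N + 1), δ₂ j • g j ω) := by
        funext ω
        simp only [Pi.add_apply, Pi.smul_apply, Finset.smul_sum, ← Finset.sum_add_distrib]
        refine Finset.sum_congr rfl fun j _ => ?_
        by_cases hjk : j = k
        · subst hjk
          rw [hδ₁, hδ₂, Function.update_self, Function.update_self,
            smul_smul, smul_smul, ← add_smul, hxyt]
        · rw [hδ₁, hδ₂, Function.update_of_ne hjk, Function.update_of_ne hjk,
            smul_smul, smul_smul, ← add_smul, ← add_mul]
          have h1 : ((t : ℝ) : 𝕜) + ((1 - t : ℝ) : 𝕜) = 1 := by push_cast; ring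
          rw [h1, one_mul]
      have hnn1 : ((‖((t : ℝ) : 𝕜)‖₊ : ℝ≥0∞)) = ENNReal.ofReal t := by
        rw [← enorm_eq_nnnorm, ← ofReal_norm, RCLike.norm_ofReal, abs_of_nonneg ht0]
      have hnn2 : ((‖((1 - t : ℝ) : 𝕜)‖₊ : ℝ≥0∞)) = ENNReal.ofReal (1 - t) := by
        rw [← enorm_eq_nnnorm, ← ofReal_norm, RCLike.norm_ofReal, abs_of_nonneg (by linarith)]
      calc eLpNorm (fun ω => ∑ j ∈ Finset.range (N + 1), δ j • g j ω) p' μ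
          ≤ eLpNorm (((t : 𝕜) • fun ω => ∑ j ∈ Finset.range (N + 1), δ₁ j • g j ω)) p' μ
            + eLpNorm ((((1 - t : ℝ) : 𝕜) • fun ω => ∑ j ∈ Finset.range (N + 1), δ₂ j • g j ω)) p' μ := by
            rw [hpt]
            exact eLpNorm_add_le ((hsm δ₁).const_smul _) ((hsm δ₂).const_smul _) hp'
        _ = ENNReal.ofReal t * eLpNorm (fun ω => ∑ j ∈ Finset.range (N + 1), δ₁ j • g j ω) p' μ
            + ENNReal.ofReal (1 - t) * eLpNorm (fun ω => ∑ j ∈ Finset.range (N + 1), δ₂ j • g j ω) p' μ := by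
            rw [eLpNorm_const_smul, eLpNorm_const_smul, enorm_eq_nnnorm, enorm_eq_nnnorm, hnn1, hnn2]
        _ ≤ ENNReal.ofReal t * C + ENNReal.ofReal (1 - t) * C := by
            gcongr
        _ = C := by
            rw [← add_mul, ← ENNReal.ofReal_add ht0 (by linarith)]
            norm_num
  have hε' : (fun ω => ∑ j ∈ Finset.range (N + 1), ε j • g j ω)
      = fun ω => ∑ j ∈ Finset.range (N + 1), (fun n => if n ≤ N then ε n else b₀) j • g j ω := by
    funext ω
    refine Finset.sum_congr rfl fun j hj => ?_
    simp [Nat.lt_succ_iff.mp (Finset.mem_range.mp hj)]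
  rw [hε']
  refine claim (N + 1) _ (fun n hn => ?_) (fun n hn => ?_)
  · simp only [if_pos (Nat.lt_succ_iff.mp hn)]; exact hε n
  · simp only [if_neg (by omega : ¬ n ≤ N)]; exact hb₀

/-- `β` is an admissible constant for the `UMD_p^A` martingale-transform inequality on `X`:
for every probability space, every filtration, every `X`-valued `L^p`-martingale `f` and every
`A`-valued (deterministic) sequence `(ε_n)`, the transformed martingale
`∑_{k=0}^{N} ε_k d f_k` satisfies the `L^p` bound with constant `β`. -/
def UMDAdmissible (𝕜 : Type) [RCLike 𝕜] (X : Type) [NormedAddCommGroup X]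
    [NormedSpace 𝕜 X] [NormedSpace ℝ X] [CompleteSpace X] (p : ℝ) (A : Set 𝕜)
    (β : ℝ≥0∞) : Prop :=
  ∀ (Ω : Type) (m : MeasurableSpace Ω) (μ : Measure Ω), IsProbabilityMeasure μ →
    ∀ (ℱ : Filtration ℕ m) (f : ℕ → Ω → X), Martingale f ℱ μ →
    (∀ n, MemLp (f n) (ENNReal.ofReal p) μ) →
    ∀ (N : ℕ) (ε : ℕ → 𝕜), (∀ n, ε n ∈ A) →
    eLpNorm (fun ω => ∑ k ∈ Finset.range (N + 1), ε k • mdiff f k ω)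
        (ENNReal.ofReal p) μ ≤ β * eLpNorm (f N) (ENNReal.ofReal p) μ

variable {𝕜 : Type} [RCLike 𝕜] {X : Type} [NormedAddCommGroup X]
    [NormedSpace 𝕜 X] [NormedSpace ℝ X] [CompleteSpace X] {p : ℝ}

lemma dir1 (hp : 1 < p) {A : Set 𝕜} {M : ℝ} (hM : 0 < M)
    (hMA : ∀ a ∈ A, ‖a‖ ≤ M) {β : ℝ≥0∞}
    (hβ : UMDAdmissible 𝕜 X p {ε : 𝕜 | ‖ε‖ = 1} β) :
    UMDAdmissible 𝕜 X p A (ENNReal.ofReal M * β) := by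
  intro Ω m μ hμ ℱ f hf hfLp N ε hε
  have hp' : (1 : ℝ≥0∞) ≤ ENNReal.ofReal p := by
    rw [← ENNReal.ofReal_one]; exact ENNReal.ofReal_le_ofReal hp.le
  have hg : ∀ k, AEStronglyMeasurable (mdiff f k) μ := fun k =>
    (mdiff_sm (fun n => (hf.stronglyMeasurable n).mono (ℱ.le n)) k).aestronglyMeasurable
  have hMne : ((M : ℝ) : 𝕜) ≠ 0 := by
    simpa using ne_of_gt hM
  have hB : ∀ u : ℕ → 𝕜, (∀ n, u n ∈ {z : 𝕜 | ‖z‖ = M}) →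
      eLpNorm (fun ω => ∑ k ∈ Finset.range (N + 1), u k • mdiff f k ω) (ENNReal.ofReal p) μ
        ≤ ENNReal.ofReal M * β * eLpNorm (f N) (ENNReal.ofReal p) μ := by
    intro u hu
    set v : ℕ → 𝕜 := fun n => ((M : ℝ) : 𝕜)⁻¹ * u n with hv
    have hv1 : ∀ n, v n ∈ {z : 𝕜 | ‖z‖ = 1} := by
      intro n
      have hun : ‖u n‖ = M := hu n
      simp only [hv, Set.mem_setOf_eq, norm_mul, norm_inv, RCLike.norm_ofReal,
        abs_of_pos hM, hun]
      field_simp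
    have hpt : (fun ω => ∑ k ∈ Finset.range (N + 1), u k • mdiff f k ω)
        = (((M : ℝ) : 𝕜) • fun ω => ∑ k ∈ Finset.range (N + 1), v k • mdiff f k ω) := by
      funext ω
      simp only [Pi.smul_apply, Finset.smul_sum]
      refine Finset.sum_congr rfl fun j _ => ?_
      rw [smul_smul]
      congr 1
      simp only [hv]
      field_simp
    rw [hpt, eLpNorm_const_smul]
    have hMn : ((‖((M : ℝ) : 𝕜)‖₊ : ℝ≥0∞)) = ENNReal.ofReal M := by
      rw [← enorm_eq_nnnorm, ← ofReal_norm, RCLike.norm_ofReal, abs_of_pos hM]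
    rw [enorm_eq_nnnorm, hMn, mul_assoc]
    exact mul_le_mul_right (hβ Ω m μ hμ ℱ f hf hfLp N v hv1) _
  refine key hp' hg (fun z hz => ?_) hB ε hε
  by_cases hz0 : z = 0
  · refine ⟨((M : ℝ) : 𝕜), ?_, -((M : ℝ) : 𝕜), ?_, 1/2, by norm_num, by norm_num, ?_⟩
    · show ‖((M : ℝ) : 𝕜)‖ = M
      rw [RCLike.norm_ofReal, abs_of_pos hM]
    · show ‖-((M : ℝ) : 𝕜)‖ = M
      rw [norm_neg, RCLike.norm_ofReal, abs_of_pos hM]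
    · subst hz0; push_cast; ring
  · have hzn : (0 : ℝ) < ‖z‖ := norm_pos_iff.mpr hz0
    set x : 𝕜 := ((M / ‖z‖ : ℝ) : 𝕜) * z with hx
    have hxn : ‖x‖ = M := by
      rw [hx, norm_mul, RCLike.norm_ofReal, abs_of_pos (div_pos hM hzn)]
      field_simp
    refine ⟨x, hxn, -x, by simpa using hxn, (1 + ‖z‖ / M) / 2, by positivity, ?_, ?_⟩
    · have h1 : ‖z‖ ≤ M := hMA z hz
      have h2 : ‖z‖ / M ≤ 1 := (div_le_one hM).mpr h1
      linarith
    · have step1 : (((((1 + ‖z‖ / M) / 2 : ℝ)) : 𝕜)) * x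
          + (((1 - (1 + ‖z‖ / M) / 2 : ℝ)) : 𝕜) * (-x) = ((‖z‖ / M : ℝ) : 𝕜) * x := by
        push_cast; ring
      rw [step1, hx, ← mul_assoc, ← RCLike.ofReal_mul]
      have : (‖z‖ / M) * (M / ‖z‖) = 1 := by field_simp
      rw [this]
      simp

lemma dir2 (hp : 1 < p) {A : Set 𝕜} {a b : 𝕜} (ha : a ∈ A) (hb : b ∈ A) (hab : a ≠ b)
    {β : ℝ≥0∞} (hβ : UMDAdmissible 𝕜 X p A β) :
    UMDAdmissible 𝕜 X p {ε : 𝕜 | ‖ε‖ = 1}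
      ((1 + (‖(RCLike.I : 𝕜)‖₊ : ℝ≥0∞))
        * ((‖(2 / (a - b) : 𝕜)‖₊ : ℝ≥0∞) * (β + (‖((a + b) / 2 : 𝕜)‖₊ : ℝ≥0∞)))) := by
  intro Ω m μ hμ ℱ f hf hfLp N ε hε
  have hp' : (1 : ℝ≥0∞) ≤ ENNReal.ofReal p := by
    rw [← ENNReal.ofReal_one]; exact ENNReal.ofReal_le_ofReal hp.le
  have hab' : a - b ≠ 0 := sub_ne_zero.mpr hab
  have hg : ∀ k, AEStronglyMeasurable (mdiff f k) μ := fun k =>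
    (mdiff_sm (fun n => (hf.stronglyMeasurable n).mono (ℱ.le n)) k).aestronglyMeasurable
  have hsm : ∀ η : ℕ → 𝕜,
      AEStronglyMeasurable (fun ω => ∑ k ∈ Finset.range (N + 1), η k • mdiff f k ω) μ := by
    intro η
    exact Finset.aestronglyMeasurable_fun_sum _ fun j _ => (hg j).const_smul (η j)
  set E := eLpNorm (f N) (ENNReal.ofReal p) μ with hE
  set β₁ : ℝ≥0∞ := (‖(2 / (a - b) : 𝕜)‖₊ : ℝ≥0∞) * (β + (‖((a + b) / 2 : 𝕜)‖₊ : ℝ≥0∞))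
    with hβ₁
  have hsigns : ∀ δ : ℕ → 𝕜, (∀ n, δ n ∈ ({1, -1} : Set 𝕜)) →
      eLpNorm (fun ω => ∑ k ∈ Finset.range (N + 1), δ k • mdiff f k ω) (ENNReal.ofReal p) μ
        ≤ β₁ * E := by
    intro δ hδ
    set γ : ℕ → 𝕜 := fun n => (a + b) / 2 + (a - b) / 2 * δ n with hγ
    have hγA : ∀ n, γ n ∈ A := by
      intro n
      rcases hδ n with h1 | h1
      · have : γ n = a := by simp only [hγ, h1]; field_simp; ring
        rw [this]; exact ha
      · rw [Set.mem_singleton_iff] at h1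
        have : γ n = b := by simp only [hγ, h1]; field_simp; ring
        rw [this]; exact hb
    have hfN : f N = fun ω => ∑ k ∈ Finset.range (N + 1), mdiff f k ω := by
      funext ω; exact (mdiff_sum f N ω).symm
    have hpt : (fun ω => ∑ k ∈ Finset.range (N + 1), δ k • mdiff f k ω)
        = ((2 / (a - b) : 𝕜) •
            ((fun ω => ∑ k ∈ Finset.range (N + 1), γ k • mdiff f k ω)
              - ((a + b) / 2 : 𝕜) • f N)) := by
      funext ω
      simp only [Pi.smul_apply, Pi.sub_apply, hfN, Finset.smul_sum, ← Finset.sum_sub_distrib]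
      refine Finset.sum_congr rfl fun j _ => ?_
      rw [← sub_smul, smul_smul]
      congr 1
      simp only [hγ]
      field_simp
      ring
    rw [hpt, eLpNorm_const_smul]
    have hle : eLpNorm ((fun ω => ∑ k ∈ Finset.range (N + 1), γ k • mdiff f k ω)
          - ((a + b) / 2 : 𝕜) • f N) (ENNReal.ofReal p) μ
        ≤ β * E + (‖((a + b) / 2 : 𝕜)‖₊ : ℝ≥0∞) * E := by
      refine le_trans (eLpNorm_sub_le (hsm γ)
        ((((hf.stronglyMeasurable N).mono (ℱ.le N)).aestronglyMeasurable).const_smul _) hp') ?_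
      exact add_le_add (hβ Ω m μ hμ ℱ f hf hfLp N γ hγA)
        (le_of_eq (eLpNorm_const_smul _ _ _ _))
    calc (‖(2 / (a - b) : 𝕜)‖₊ : ℝ≥0∞) * eLpNorm _ (ENNReal.ofReal p) μ
        ≤ (‖(2 / (a - b) : 𝕜)‖₊ : ℝ≥0∞)
            * (β * E + (‖((a + b) / 2 : 𝕜)‖₊ : ℝ≥0∞) * E) := mul_le_mul_right hle _
      _ = β₁ * E := by rw [hβ₁]; ring
  set A₁ : Set 𝕜 := {z : 𝕜 | ∃ t : ℝ, |t| ≤ 1 ∧ z = (t : 𝕜)} with hA₁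
  have hIcc : ∀ δ : ℕ → 𝕜, (∀ n, δ n ∈ A₁) →
      eLpNorm (fun ω => ∑ k ∈ Finset.range (N + 1), δ k • mdiff f k ω) (ENNReal.ofReal p) μ
        ≤ β₁ * E := by
    refine key hp' hg ?_ hsigns
    rintro z ⟨t, ht, rfl⟩
    obtain ⟨ht1, ht2⟩ := abs_le.mp ht
    refine ⟨1, Or.inl rfl, -1, Or.inr rfl, (t + 1) / 2, by linarith, by linarith, ?_⟩
    push_cast; ring
  have hxA : ∀ n, ((RCLike.re (ε n) : ℝ) : 𝕜) ∈ A₁ := by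
    intro n
    refine ⟨RCLike.re (ε n), ?_, rfl⟩
    have h1 := RCLike.abs_re_le_norm (ε n)
    have h2 : ‖ε n‖ = 1 := hε n
    rw [h2] at h1; exact h1
  have hyA : ∀ n, ((RCLike.im (ε n) : ℝ) : 𝕜) ∈ A₁ := by
    intro n
    refine ⟨RCLike.im (ε n), ?_, rfl⟩
    have h1 := RCLike.abs_im_le_norm (ε n)
    have h2 : ‖ε n‖ = 1 := hε n
    rw [h2] at h1; exact h1
  have hpt : (fun ω => ∑ k ∈ Finset.range (N + 1), ε k • mdiff f k ω)
      = (fun ω => ∑ k ∈ Finset.range (N + 1), ((RCLike.re (ε k) : ℝ) : 𝕜) • mdiff f k ω)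
        + ((RCLike.I : 𝕜) •
          fun ω => ∑ k ∈ Finset.range (N + 1), ((RCLike.im (ε k) : ℝ) : 𝕜) • mdiff f k ω) := by
    funext ω
    simp only [Pi.add_apply, Pi.smul_apply, Finset.smul_sum, ← Finset.sum_add_distrib]
    refine Finset.sum_congr rfl fun j _ => ?_
    rw [smul_smul, ← add_smul]
    congr 1
    rw [mul_comm]
    exact (RCLike.re_add_im (ε j)).symm
  rw [hpt]
  refine le_trans (eLpNorm_add_le (hsm _) ((hsm _).const_smul _) hp') ?_
  rw [eLpNorm_const_smul]
  have h1 := hIcc _ hxA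
  have h2 := hIcc _ hyA
  calc eLpNorm (fun ω => ∑ k ∈ Finset.range (N + 1),
          ((RCLike.re (ε k) : ℝ) : 𝕜) • mdiff f k ω) (ENNReal.ofReal p) μ
        + (‖(RCLike.I : 𝕜)‖₊ : ℝ≥0∞) * eLpNorm (fun ω => ∑ k ∈ Finset.range (N + 1),
          ((RCLike.im (ε k) : ℝ) : 𝕜) • mdiff f k ω) (ENNReal.ofReal p) μ
      ≤ β₁ * E + (‖(RCLike.I : 𝕜)‖₊ : ℝ≥0∞) * (β₁ * E) :=
        add_le_add h1 (mul_le_mul_right h2 _)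
    _ = (1 + (‖(RCLike.I : 𝕜)‖₊ : ℝ≥0∞)) * β₁ * E := by ring

/-- The `UMD_p^A` constant `β_{p,X}^A ∈ [0,∞]` of `X`. -/
noncomputable def umdConst (𝕜 : Type) [RCLike 𝕜] (X : Type) [NormedAddCommGroup X]
    [NormedSpace 𝕜 X] [NormedSpace ℝ X] [CompleteSpace X] (p : ℝ) (A : Set 𝕜) : ℝ≥0∞ :=
  sInf {β : ℝ≥0∞ | UMDAdmissible 𝕜 X p A β}

theorem umdConst_finite_iff_UMD (𝕜 : Type) [RCLike 𝕜] (X : Type) [NormedAddCommGroup X]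
    [NormedSpace 𝕜 X] [NormedSpace ℝ X] [CompleteSpace X] (p : ℝ) (hp : 1 < p)
    (A : Set 𝕜) (hA : Bornology.IsBounded A)
    (htwo : ∃ x ∈ A, ∃ y ∈ A, x ≠ y) :
    umdConst 𝕜 X p A ≠ ⊤ ↔ umdConst 𝕜 X p {ε : 𝕜 | ‖ε‖ = 1} ≠ ⊤ := by
  unfold umdConst
  have hexists : ∀ S : Set 𝕜, sInf {β : ℝ≥0∞ | UMDAdmissible 𝕜 X p S β} ≠ ⊤ →
      ∃ β : ℝ≥0∞, β ≠ ⊤ ∧ UMDAdmissible 𝕜 X p S β := by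
    intro S h
    by_contra h'
    push_neg at h'
    exact h (sInf_eq_top.mpr fun β hβ => by_contra fun hne => h' β hne hβ)
  constructor
  · intro h
    obtain ⟨β, hβt, hβ⟩ := hexists A h
    obtain ⟨a, ha, b0, hb0, hab⟩ := htwo
    have hadm := dir2 hp ha hb0 hab hβ
    refine ne_top_of_le_ne_top ?_ (sInf_le hadm)
    exact ENNReal.mul_ne_top
      (ENNReal.add_ne_top.mpr ⟨ENNReal.one_ne_top, ENNReal.coe_ne_top⟩)
      (ENNReal.mul_ne_top ENNReal.coe_ne_top
        (ENNReal.add_ne_top.mpr ⟨hβt, ENNReal.coe_ne_top⟩))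
  · intro h
    obtain ⟨β, hβt, hβ⟩ := hexists _ h
    obtain ⟨M₀, hM₀⟩ := hA.exists_norm_le
    have hM : (0 : ℝ) < max M₀ 1 := lt_of_lt_of_le zero_lt_one (le_max_right _ _)
    have hbound : ∀ a ∈ A, ‖a‖ ≤ max M₀ 1 := fun a ha => (hM₀ a ha).trans (le_max_left _ _)
    have hadm := dir1 hp hM hbound hβ
    exact ne_top_of_le_ne_top (ENNReal.mul_ne_top ENNReal.ofReal_ne_top hβt) (sInf_le hadm)
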